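/- Let T be a locally finite face-to-face tiling of Euclidean d-space ℝ^d by convex d-polytopes with only finitely many congruence classes of tiles, and let n be a positive integer. Then T is n-isohedral if and only if there exists a positive integer k such that: (1) M_{k−1}(T) = M_k(T); (2) for every tile P of T, G_{k−1}(P) = G_k(P); and M_k(T) = n. -/

import Mathlib

noncomputable section
open scoped Classical

abbrev EucSp (d : ℕ) := EuclideanSpace ℝ (Fin d)

/-- `F` is a face of the convex set `P` (exposed face; includes `∅` and `P` itself). -/
def IsFaceOf {d : ℕ} (F P : Set (EucSp d)) : Prop := IsExposed ℝ P F

/-- A convex `d`-polytope: the convex hull of a finite point set, with nonempty interior. -/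
def IsPolytope (d : ℕ) (P : Set (EucSp d)) : Prop :=
  (∃ s : Finset (EucSp d), P = convexHull ℝ (s : Set (EucSp d))) ∧ (interior P).Nonempty

/-- Affine dimension of a set, the empty set having dimension `-1`. -/
def fdimZ {d : ℕ} (F : Set (EucSp d)) : ℤ :=
  if F = ∅ then -1 else (Module.finrank ℝ (affineSpan ℝ F).direction : ℤ)

/-- A locally finite face-to-face tiling of `ℝ^d` by convex `d`-polytopes. -/
structure Tiling (d : ℕ) where
  tiles : Set (Set (EucSp d))
  countable : tiles.Countable
  polytope : ∀ P ∈ tiles, IsPolytope d P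
  covers : ⋃₀ tiles = Set.univ
  disjointInteriors : ∀ P ∈ tiles, ∀ Q ∈ tiles, P ≠ Q → interior P ∩ interior Q = ∅
  locallyFinite : ∀ x : EucSp d, ∃ U ∈ nhds x, {P | P ∈ tiles ∧ (P ∩ U).Nonempty}.Finite
  faceToFace : ∀ P ∈ tiles, ∀ Q ∈ tiles, IsFaceOf (P ∩ Q) P ∧ IsFaceOf (P ∩ Q) Q

variable {d : ℕ}

/-- A sequence of `n+1` tiles from `P` to `Q` in which any two consecutive tiles meet
in a face of dimension at least `d - 2`. -/
def TileChain (T : Tiling d) (P Q : Set (EucSp d)) (n : ℕ) : Prop :=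
  ∃ f : ℕ → Set (EucSp d), f 0 = P ∧ f n = Q ∧ (∀ j ≤ n, f j ∈ T.tiles) ∧
    ∀ j, 1 ≤ j → j ≤ n → (d : ℤ) - 2 ≤ fdimZ (f (j - 1) ∩ f j)

/-- The distance between two tiles of `T` (`⊤` if they cannot be joined). -/
def tileDist (T : Tiling d) (P Q : Set (EucSp d)) : ℕ∞ :=
  sInf {n : ℕ∞ | ∃ m : ℕ, n = (m : ℕ∞) ∧ TileChain T P Q m}

/-- The `k`-th corona of `P`: the set of all faces of tiles at distance at most `k` from `P`. -/
def corona (T : Tiling d) (k : ℕ) (P : Set (EucSp d)) : Set (Set (EucSp d)) :=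
  {F | ∃ Q ∈ T.tiles, tileDist T P Q ≤ (k : ℕ∞) ∧ IsFaceOf F Q}

/-- The set of all faces of tiles of `T` (the face-lattice of `T`), ordered by inclusion. -/
def facesOf (T : Tiling d) : Set (Set (EucSp d)) :=
  {F | ∃ Q ∈ T.tiles, IsFaceOf F Q}

/-- An order isomorphism between the `k`-th coronas of `P` and `P'` is an isomorphism of
centered coronas when it maps the center `P` to the center `P'`. -/
def IsCenteredIso (T : Tiling d) (k : ℕ) (P P' : Set (EucSp d))
    (e : ↥(corona T k P) ≃o ↥(corona T k P')) : Prop :=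
  ∀ (hP : P ∈ corona T k P) (hP' : P' ∈ corona T k P'), e ⟨P, hP⟩ = ⟨P', hP'⟩

/-- The centered `k`-th coronas `(P, C_k(P))` and `(P', C_k(P'))` are isomorphic. -/
def CoronasIsomorphic (T : Tiling d) (k : ℕ) (P P' : Set (EucSp d)) : Prop :=
  ∃ e : ↥(corona T k P) ≃o ↥(corona T k P'), IsCenteredIso T k P P' e

/-- `N_k(T)`: the number of isomorphism classes of centered `k`-th coronas of tiles of `T`. -/
def Ncount (T : Tiling d) (k : ℕ) : Cardinal :=
  Cardinal.mk (Quot (fun P Q : ↥T.tiles =>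
    CoronasIsomorphic T k (P : Set (EucSp d)) (Q : Set (EucSp d))))

/-- Two tiles are equivalent under the combinatorial automorphism group `Γ(T)`. -/
def TilesEquiv (T : Tiling d) (P Q : Set (EucSp d)) : Prop :=
  ∃ (φ : ↥(facesOf T) ≃o ↥(facesOf T)) (hP : P ∈ facesOf T) (hQ : Q ∈ facesOf T),
    φ ⟨P, hP⟩ = ⟨Q, hQ⟩

/-- The number of orbits of `Γ(T)` on the tiles of `T`. -/
def orbitCount (T : Tiling d) : Cardinal :=
  Cardinal.mk (Quot (fun P Q : ↥T.tiles =>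
    TilesEquiv T (P : Set (EucSp d)) (Q : Set (EucSp d))))

/-- `Γ(C_{k-1}(P)) = Γ(C_k(P))`: every automorphism of the centered `(k-1)`-st corona of `P`
extends to an automorphism of the centered `k`-th corona of `P`. -/
def AutosExtend (T : Tiling d) (k : ℕ) (P : Set (EucSp d)) : Prop :=
  ∀ e : ↥(corona T (k - 1) P) ≃o ↥(corona T (k - 1) P), IsCenteredIso T (k - 1) P P e →
    ∃ f : ↥(corona T k P) ≃o ↥(corona T k P), IsCenteredIso T k P P f ∧
      ∀ F (hF : F ∈ corona T (k - 1) P) (hF' : F ∈ corona T k P),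
        ((f ⟨F, hF'⟩ : Set (EucSp d))) = ((e ⟨F, hF⟩ : Set (EucSp d)))

/-- The `k`-th tile corona of `P`: the set of tiles at distance at most `k` from `P`. -/
def tileCorona (T : Tiling d) (k : ℕ) (P : Set (EucSp d)) : Set (Set (EucSp d)) :=
  {Q | Q ∈ T.tiles ∧ tileDist T P Q ≤ (k : ℕ∞)}

/-- The centered `k`-th tile coronas `(P, C_k(P))` and `(P', C_k(P'))` are pairwise congruent. -/
def CongruentCoronas (T : Tiling d) (k : ℕ) (P P' : Set (EucSp d)) : Prop :=
  ∃ α : EucSp d ≃ᵢ EucSp d, α '' P = P' ∧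
    (fun Q => α '' Q) '' tileCorona T k P = tileCorona T k P'

/-- `M_k(T)`: the number of pairwise congruence classes of centered `k`-th tile coronas. -/
def Mcount (T : Tiling d) (k : ℕ) : Cardinal :=
  Cardinal.mk (Quot (fun P Q : ↥T.tiles =>
    CongruentCoronas T k (P : Set (EucSp d)) (Q : Set (EucSp d))))

/-- `α` is a symmetry of the tiling `T`: an isometry of `ℝ^d` mapping `T` onto itself. -/
def IsSymmetryOf (T : Tiling d) (α : EucSp d ≃ᵢ EucSp d) : Prop :=
  (fun Q => α '' Q) '' T.tiles = T.tiles

/-- Two tiles are equivalent under the symmetry group `G(T)` of `T`. -/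
def GeomEquiv (T : Tiling d) (P Q : Set (EucSp d)) : Prop :=
  ∃ α : EucSp d ≃ᵢ EucSp d, IsSymmetryOf T α ∧ α '' P = Q

/-- The number of orbits of `G(T)` on the tiles of `T`. -/
def geomOrbitCount (T : Tiling d) : Cardinal :=
  Cardinal.mk (Quot (fun P Q : ↥T.tiles =>
    GeomEquiv T (P : Set (EucSp d)) (Q : Set (EucSp d))))

/-- `G_{k-1}(P) = G_k(P)`: every symmetry of the centered `(k-1)`-st tile corona of `P`
is a symmetry of the centered `k`-th tile corona of `P`. -/
def SymsExtend (T : Tiling d) (k : ℕ) (P : Set (EucSp d)) : Prop :=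
  ∀ α : EucSp d ≃ᵢ EucSp d, α '' P = P →
    (fun Q => α '' Q) '' tileCorona T (k - 1) P = tileCorona T (k - 1) P →
    (fun Q => α '' Q) '' tileCorona T k P = tileCorona T k P

namespace LocalThm
open Set

variable {d : ℕ} {T : Tiling d}

/-- The affine equivalence underlying an isometry of Euclidean space. -/
def aff (α : EucSp d ≃ᵢ EucSp d) : EucSp d ≃ᵃ[ℝ] EucSp d :=
  α.toRealAffineIsometryEquiv.toAffineEquiv

lemma coe_aff (α : EucSp d ≃ᵢ EucSp d) : ⇑(aff α) = ⇑α := rfl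

lemma image_inter' (α : EucSp d ≃ᵢ EucSp d) (A B : Set (EucSp d)) :
    α '' (A ∩ B) = α '' A ∩ α '' B :=
  Set.image_inter α.injective

lemma image_symm_image (α : EucSp d ≃ᵢ EucSp d) (A : Set (EucSp d)) :
    α.symm '' (α '' A) = A := by
  rw [Set.image_image]; simp

lemma image_image_symm (α : EucSp d ≃ᵢ EucSp d) (A : Set (EucSp d)) :
    α '' (α.symm '' A) = A := by
  rw [Set.image_image]; simp

lemma fdimZ_image (α : EucSp d ≃ᵢ EucSp d) (F : Set (EucSp d)) :
    fdimZ (α '' F) = fdimZ F := by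
  by_cases hF : F = ∅
  · subst hF; simp [fdimZ]
  · have h2 : ¬ (α '' F = ∅) := by simpa [Set.image_eq_empty]
    rw [fdimZ, fdimZ, if_neg hF, if_neg h2]
    have h3 : affineSpan ℝ (α '' F) = (affineSpan ℝ F).map (aff α).toAffineMap := by
      rw [AffineSubspace.map_span]
      congr 1
    rw [h3, AffineSubspace.map_direction]
    congr 1
    have := LinearEquiv.finrank_map_eq (R := ℝ) (aff α).linear (affineSpan ℝ F).direction
    exact this


lemma tile_closed {P : Set (EucSp d)} (hP : P ∈ T.tiles) : IsClosed P := by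
  obtain ⟨⟨s, rfl⟩, -⟩ := T.polytope P hP
  exact (Set.Finite.isCompact_convexHull ℝ (s.finite_toSet)).isClosed

lemma tile_nonempty {P : Set (EucSp d)} (hP : P ∈ T.tiles) : P.Nonempty := by
  obtain ⟨-, x, hx⟩ := T.polytope P hP
  exact ⟨x, interior_subset hx⟩

lemma tile_span {P : Set (EucSp d)} (hP : P ∈ T.tiles) : affineSpan ℝ P = ⊤ := by
  obtain ⟨-, hne⟩ := T.polytope P hP
  refine top_unique ?_
  rw [← isOpen_interior.affineSpan_eq_top hne]
  exact affineSpan_mono _ interior_subset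

lemma fdimZ_tile {P : Set (EucSp d)} (hP : P ∈ T.tiles) : fdimZ P = d := by
  have hne : ¬ (P = ∅) := Set.nonempty_iff_ne_empty.1 (tile_nonempty hP)
  rw [fdimZ, if_neg hne, tile_span hP]
  norm_cast
  rw [AffineSubspace.direction_top]
  simp [finrank_euclideanSpace]

lemma fdimZ_ge_sub_two_of_tile {P : Set (EucSp d)} (hP : P ∈ T.tiles) :
    (d : ℤ) - 2 ≤ fdimZ (P ∩ P) := by
  rw [Set.inter_self, fdimZ_tile hP]; omega

lemma tileChain_refl {P : Set (EucSp d)} (hP : P ∈ T.tiles) : TileChain T P P 0 :=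
  ⟨fun _ => P, rfl, rfl, fun _ _ => hP, fun j h1 h2 => by omega⟩

lemma tileChain_single {P Q : Set (EucSp d)} (hP : P ∈ T.tiles) (hQ : Q ∈ T.tiles)
    (h : (d : ℤ) - 2 ≤ fdimZ (P ∩ Q)) : TileChain T P Q 1 := by
  refine ⟨fun j => if j = 0 then P else Q, by simp, by simp, ?_, ?_⟩
  · intro j _; by_cases h0 : j = 0 <;> simp [h0, hP, hQ]
  · intro j h1 h2
    have : j = 1 := by omega
    subst this; simpa using h

lemma tileChain_pad {P Q : Set (EucSp d)} {m m' : ℕ} (h : TileChain T P Q m) (hm : m ≤ m') :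
    TileChain T P Q m' := by
  obtain ⟨f, h0, hm', htiles, hcons⟩ := h
  refine ⟨fun j => f (min j m), by simpa, by simp [Nat.min_eq_right hm, hm'], ?_, ?_⟩
  · intro j _; exact htiles _ (min_le_right _ _)
  · intro j h1 h2
    show (d : ℤ) - 2 ≤ fdimZ (f (min (j-1) m) ∩ f (min j m))
    by_cases hj : j ≤ m
    · rw [Nat.min_eq_left (by omega : j - 1 ≤ m), Nat.min_eq_left hj]
      exact hcons j h1 hj
    · rw [Nat.min_eq_right (by omega : m ≤ j - 1), Nat.min_eq_right (by omega : m ≤ j), hm']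
      have hQt : Q ∈ T.tiles := hm' ▸ htiles m le_rfl
      exact fdimZ_ge_sub_two_of_tile hQt

lemma tileChain_concat {P Q R : Set (EucSp d)} {m m' : ℕ}
    (h : TileChain T P Q m) (h' : TileChain T Q R m') : TileChain T P R (m + m') := by
  obtain ⟨f, hf0, hfm, hft, hfc⟩ := h
  obtain ⟨g, hg0, hgm, hgt, hgc⟩ := h'
  refine ⟨fun j => if j < m then f j else g (j - m), ?_, ?_, ?_, ?_⟩
  · show (if 0 < m then f 0 else g (0 - m)) = P
    by_cases h0 : 0 < m
    · simpa [h0]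
    · have hm0 : m = 0 := by omega
      rw [if_neg h0, hm0, Nat.sub_zero, hg0, ← hfm, hm0, hf0]
  · show (if m + m' < m then f (m + m') else g (m + m' - m)) = R
    rw [if_neg (by omega), Nat.add_sub_cancel_left, hgm]
  · intro j hj
    show (if j < m then f j else g (j - m)) ∈ T.tiles
    by_cases hlt : j < m
    · rw [if_pos hlt]; exact hft j (by omega)
    · rw [if_neg hlt]; exact hgt (j - m) (by omega)
  · intro j h1 h2
    show (d : ℤ) - 2 ≤ fdimZ ((if j - 1 < m then f (j-1) else g (j - 1 - m)) ∩
      (if j < m then f j else g (j - m)))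
    by_cases hlt : j < m
    · rw [if_pos (by omega : j - 1 < m), if_pos hlt]
      exact hfc j h1 (by omega)
    · by_cases hje : j = m
      · by_cases hm0 : m = 0
        · omega
        · rw [if_pos (by omega : j - 1 < m), if_neg hlt]
          have e : g (j - m) = f m := by rw [hje, Nat.sub_self, hg0, hfm]
          rw [e, hje]
          exact hfc m (by omega) le_rfl
      · rw [if_neg (by omega : ¬ (j - 1 < m)), if_neg hlt,
          (by omega : j - 1 - m = j - m - 1)]
        exact hgc (j - m) (by omega) (by omega)

lemma tileDist_le_iff {P Q : Set (EucSp d)} {m : ℕ} :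
    tileDist T P Q ≤ (m : ℕ∞) ↔ TileChain T P Q m := by
  constructor
  · intro h
    by_contra hc
    have hb : ((m:ℕ∞) + 1) ≤ tileDist T P Q := by
      refine le_sInf ?_
      rintro x ⟨m', rfl, hchain⟩
      by_cases hle : m' ≤ m
      · exact absurd (tileChain_pad hchain hle) hc
      · have : (m + 1 : ℕ) ≤ m' := by omega
        calc ((m:ℕ∞) + 1) = ((m+1 : ℕ) : ℕ∞) := by push_cast; ring
        _ ≤ (m' : ℕ∞) := by exact_mod_cast this
    have := le_trans hb h
    have h2 : ((m+1 : ℕ) : ℕ∞) ≤ ((m : ℕ) : ℕ∞) := by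
      calc ((m+1 : ℕ) : ℕ∞) = (m:ℕ∞) + 1 := by push_cast; ring
      _ ≤ (m : ℕ∞) := this
    have := Nat.cast_le (α := ℕ∞) |>.1 h2
    omega
  · intro h
    exact sInf_le ⟨m, rfl, h⟩

lemma tileDist_self {P : Set (EucSp d)} (hP : P ∈ T.tiles) : tileDist T P P ≤ (0 : ℕ) :=
  tileDist_le_iff.2 (tileChain_refl hP)

lemma tileDist_triangle {P Q R : Set (EucSp d)} {m m' : ℕ}
    (h : tileDist T P Q ≤ (m : ℕ∞)) (h' : tileDist T Q R ≤ (m' : ℕ∞)) :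
    tileDist T P R ≤ ((m + m' : ℕ) : ℕ∞) :=
  tileDist_le_iff.2 (tileChain_concat (tileDist_le_iff.1 h) (tileDist_le_iff.1 h'))
lemma tileCorona_subset_tiles {k : ℕ} {P : Set (EucSp d)} :
    tileCorona T k P ⊆ T.tiles := fun _ h => h.1

lemma self_mem_tileCorona {P : Set (EucSp d)} (hP : P ∈ T.tiles) (k : ℕ) :
    P ∈ tileCorona T k P := by
  refine ⟨hP, le_trans ?_ (zero_le)⟩
  simpa using tileDist_self hP

lemma tileCorona_mono {j k : ℕ} (hjk : j ≤ k) {P : Set (EucSp d)} :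
    tileCorona T j P ⊆ tileCorona T k P := by
  rintro Q ⟨h1, h2⟩
  exact ⟨h1, h2.trans (by exact_mod_cast hjk)⟩

lemma tileChain_prefix {P : Set (EucSp d)} {m : ℕ} {f : ℕ → Set (EucSp d)}
    (hf0 : f 0 = P) (hft : ∀ j ≤ m, f j ∈ T.tiles)
    (hfc : ∀ j, 1 ≤ j → j ≤ m → (d : ℤ) - 2 ≤ fdimZ (f (j - 1) ∩ f j))
    {j : ℕ} (hj : j ≤ m) : TileChain T P (f j) j :=
  ⟨f, hf0, rfl, fun i hi => hft i (le_trans hi hj), fun i h1 h2 => hfc i h1 (le_trans h2 hj)⟩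

lemma mem_image_corona (α : EucSp d ≃ᵢ EucSp d) {k : ℕ} {P P' : Set (EucSp d)}
    (H : (fun Q => α '' Q) '' tileCorona T k P = tileCorona T k P')
    {R : Set (EucSp d)} (hR : R ∈ tileCorona T k P) : α '' R ∈ tileCorona T k P' := by
  rw [← H]; exact Set.mem_image_of_mem _ hR

lemma image_corona_symm (α : EucSp d ≃ᵢ EucSp d) {A B : Set (Set (EucSp d))}
    (H : (fun Q => α '' Q) '' A = B) : (fun Q => α.symm '' Q) '' B = A := by
  rw [← H, Set.image_image]
  simp only [image_symm_image]
  exact Set.image_id A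

lemma image_chain (α : EucSp d ≃ᵢ EucSp d) {k : ℕ} {P P' : Set (EucSp d)}
    (H : (fun Q => α '' Q) '' tileCorona T k P = tileCorona T k P')
    {S Q : Set (EucSp d)} {a b : ℕ} (hab : a + b ≤ k)
    (ha : tileDist T P S ≤ (a : ℕ∞)) (hb : tileDist T S Q ≤ (b : ℕ∞)) :
    tileDist T (α '' S) (α '' Q) ≤ (b : ℕ∞) := by
  obtain ⟨g, hg0, hgb, hgt, hgc⟩ := tileDist_le_iff.1 hb
  have hmem : ∀ j ≤ b, g j ∈ tileCorona T k P := by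
    intro j hj
    have h1 : tileDist T S (g j) ≤ (j : ℕ∞) :=
      tileDist_le_iff.2 (tileChain_prefix hg0 hgt hgc hj)
    have h2 : tileDist T P (g j) ≤ ((a + j : ℕ) : ℕ∞) := tileDist_triangle ha h1
    exact ⟨hgt j hj, h2.trans (by exact_mod_cast (by omega : a + j ≤ k))⟩
  refine tileDist_le_iff.2 ⟨fun j => α '' g j, by show α '' g 0 = α '' S; rw [hg0], by show α '' g b = α '' Q; rw [hgb], ?_, ?_⟩
  · intro j hj
    exact tileCorona_subset_tiles (mem_image_corona α H (hmem j hj))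
  · intro j h1 h2
    rw [← image_inter' α, fdimZ_image]
    exact hgc j h1 h2

lemma congr_dist_le (α : EucSp d ≃ᵢ EucSp d) {k : ℕ} {P P' : Set (EucSp d)}
    (H : (fun Q => α '' Q) '' tileCorona T k P = tileCorona T k P')
    (hPP' : α '' P = P') (hP : P ∈ T.tiles) {Q : Set (EucSp d)} {j : ℕ} (hj : j ≤ k)
    (hd : tileDist T P Q ≤ (j : ℕ∞)) : tileDist T P' (α '' Q) ≤ (j : ℕ∞) := by
  rw [← hPP']
  refine image_chain α H (a := 0) (b := j) (by omega) ?_ hd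
  simpa using tileDist_self hP

lemma congr_restrict (α : EucSp d ≃ᵢ EucSp d) {k : ℕ} {P P' : Set (EucSp d)}
    (H : (fun Q => α '' Q) '' tileCorona T k P = tileCorona T k P')
    (hPP' : α '' P = P') (hP : P ∈ T.tiles) {j : ℕ} (hj : j ≤ k) :
    (fun Q => α '' Q) '' tileCorona T j P = tileCorona T j P' := by
  have hP' : P' ∈ T.tiles := by
    have := mem_image_corona α H (self_mem_tileCorona hP k)
    rw [hPP'] at this; exact this.1
  have H' := image_corona_symm α H
  have hPP'' : α.symm '' P' = P := by rw [← hPP', image_symm_image]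
  apply Set.Subset.antisymm
  · rintro _ ⟨Q, ⟨hQt, hQd⟩, rfl⟩
    refine ⟨(mem_image_corona α H ⟨hQt, hQd.trans (by exact_mod_cast hj)⟩).1, ?_⟩
    exact congr_dist_le α H hPP' hP hj hQd
  · rintro Q' ⟨hQ't, hQ'd⟩
    refine ⟨α.symm '' Q', ⟨?_, ?_⟩, image_image_symm α Q'⟩
    · exact (mem_image_corona α.symm H' ⟨hQ't, hQ'd.trans (by exact_mod_cast hj)⟩).1
    · exact congr_dist_le α.symm H' hPP'' hP' hj hQ'd

lemma congr_step (α : EucSp d ≃ᵢ EucSp d) {k : ℕ} {P P' : Set (EucSp d)}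
    (H : (fun Q => α '' Q) '' tileCorona T k P = tileCorona T k P')
    (hPP' : α '' P = P') (hP : P ∈ T.tiles) (hk : 1 ≤ k) {S : Set (EucSp d)}
    (hS : S ∈ T.tiles) (hd : tileDist T P S ≤ ((1:ℕ) : ℕ∞)) :
    (fun Q => α '' Q) '' tileCorona T (k-1) S = tileCorona T (k-1) (α '' S) := by
  have hP' : P' ∈ T.tiles := by
    have := mem_image_corona α H (self_mem_tileCorona hP k)
    rw [hPP'] at this; exact this.1
  have H' := image_corona_symm α H
  have hPP'' : α.symm '' P' = P := by rw [← hPP', image_symm_image]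
  have hS' : α '' S ∈ T.tiles :=
    (mem_image_corona α H ⟨hS, hd.trans (by exact_mod_cast hk)⟩).1
  have hdS' : tileDist T P' (α '' S) ≤ ((1:ℕ) : ℕ∞) := congr_dist_le α H hPP' hP hk hd
  apply Set.Subset.antisymm
  · rintro _ ⟨Q, ⟨hQt, hQd⟩, rfl⟩
    refine ⟨?_, image_chain α H (a := 1) (b := k - 1) (by omega) hd hQd⟩
    have h2 : tileDist T P Q ≤ ((1 + (k-1) : ℕ) : ℕ∞) := tileDist_triangle hd hQd
    exact (mem_image_corona α H ⟨hQt, h2.trans (by exact_mod_cast (by omega : 1 + (k-1) ≤ k))⟩).1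
  · rintro Q' ⟨hQ't, hQ'd⟩
    have hmemk : Q' ∈ tileCorona T k P' := by
      have h2 : tileDist T P' Q' ≤ ((1 + (k-1) : ℕ) : ℕ∞) := tileDist_triangle hdS' hQ'd
      exact ⟨hQ't, h2.trans (by exact_mod_cast (by omega : 1 + (k-1) ≤ k))⟩
    refine ⟨α.symm '' Q', ⟨(mem_image_corona α.symm H' hmemk).1, ?_⟩, image_image_symm α Q'⟩
    have := image_chain α.symm H' (a := 1) (b := k - 1) (by omega) hdS' hQ'd
    rwa [image_symm_image] at this
lemma coe_isometry_trans (α β : EucSp d ≃ᵢ EucSp d) : ⇑(α.trans β) = ⇑β ∘ ⇑α :=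
  funext (IsometryEquiv.trans_apply α β)

lemma coe_isometry_refl : ⇑(IsometryEquiv.refl (EucSp d)) = id := rfl

lemma image_trans_set (α β : EucSp d ≃ᵢ EucSp d) (X : Set (EucSp d)) :
    (α.trans β) '' X = β '' (α '' X) := by
  rw [coe_isometry_trans, Set.image_comp]

lemma image_trans (α β : EucSp d ≃ᵢ EucSp d) (A : Set (Set (EucSp d))) :
    (fun Q => (α.trans β) '' Q) '' A = (fun Q => β '' Q) '' ((fun Q => α '' Q) '' A) := by
  rw [Set.image_image]
  exact Set.image_congr' (fun Q => image_trans_set α β Q)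

lemma congruent_refl {P : Set (EucSp d)} (hP : P ∈ T.tiles) (k : ℕ) :
    CongruentCoronas T k P P := by
  refine ⟨IsometryEquiv.refl _, by rw [coe_isometry_refl, Set.image_id], ?_⟩
  have h : (fun Q => (IsometryEquiv.refl (EucSp d)) '' Q) = fun Q : Set (EucSp d) => Q := by
    funext Q; rw [coe_isometry_refl, Set.image_id]
  rw [h, Set.image_id']

lemma congruent_symm {P Q : Set (EucSp d)} (h : CongruentCoronas T k P Q) :
    CongruentCoronas T k Q P := by
  obtain ⟨α, h1, h2⟩ := h
  exact ⟨α.symm, by rw [← h1, image_symm_image], image_corona_symm α h2⟩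

lemma congruent_trans {P Q R : Set (EucSp d)} {k : ℕ}
    (h : CongruentCoronas T k P Q) (h' : CongruentCoronas T k Q R) :
    CongruentCoronas T k P R := by
  obtain ⟨α, h1, h2⟩ := h
  obtain ⟨β, g1, g2⟩ := h'
  exact ⟨α.trans β, by rw [image_trans_set, h1, g1], by rw [image_trans, h2, g2]⟩

lemma symmetry_mem_tiles {σ : EucSp d ≃ᵢ EucSp d} (hσ : IsSymmetryOf T σ)
    {R : Set (EucSp d)} (hR : R ∈ T.tiles) : σ '' R ∈ T.tiles := by
  rw [← hσ]; exact Set.mem_image_of_mem _ hR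

lemma symmetry_symm {σ : EucSp d ≃ᵢ EucSp d} (hσ : IsSymmetryOf T σ) :
    IsSymmetryOf T σ.symm := image_corona_symm σ hσ

lemma symmetry_dist {σ : EucSp d ≃ᵢ EucSp d} (hσ : IsSymmetryOf T σ)
    {P Q : Set (EucSp d)} {m : ℕ} (h : tileDist T P Q ≤ (m : ℕ∞)) :
    tileDist T (σ '' P) (σ '' Q) ≤ (m : ℕ∞) := by
  obtain ⟨g, hg0, hgm, hgt, hgc⟩ := tileDist_le_iff.1 h
  refine tileDist_le_iff.2 ⟨fun j => σ '' g j,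
    by show σ '' g 0 = σ '' P; rw [hg0], by show σ '' g m = σ '' Q; rw [hgm], ?_, ?_⟩
  · intro j hj; exact symmetry_mem_tiles hσ (hgt j hj)
  · intro j h1 h2
    rw [← image_inter' σ, fdimZ_image]
    exact hgc j h1 h2

lemma geom_congruent {P Q : Set (EucSp d)} (h : GeomEquiv T P Q) (hP : P ∈ T.tiles)
    (k : ℕ) : CongruentCoronas T k P Q := by
  obtain ⟨σ, hσ, hPQ⟩ := h
  refine ⟨σ, hPQ, Set.Subset.antisymm ?_ ?_⟩
  · rintro _ ⟨R, ⟨hRt, hRd⟩, rfl⟩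
    exact ⟨symmetry_mem_tiles hσ hRt, by rw [← hPQ]; exact symmetry_dist hσ hRd⟩
  · rintro R' ⟨hR't, hR'd⟩
    refine ⟨σ.symm '' R', ⟨symmetry_mem_tiles (symmetry_symm hσ) hR't, ?_⟩,
      image_image_symm σ R'⟩
    have := symmetry_dist (symmetry_symm hσ) hR'd
    rwa [← hPQ, image_symm_image] at this

lemma geom_refl {P : Set (EucSp d)} : GeomEquiv T P P := by
  refine ⟨IsometryEquiv.refl _, ?_, by rw [coe_isometry_refl, Set.image_id]⟩
  show (fun Q => (IsometryEquiv.refl (EucSp d)) '' Q) '' T.tiles = T.tiles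
  have h : (fun Q => (IsometryEquiv.refl (EucSp d)) '' Q) = fun Q : Set (EucSp d) => Q := by
    funext Q; rw [coe_isometry_refl, Set.image_id]
  rw [h, Set.image_id']

lemma geom_symm {P Q : Set (EucSp d)} (h : GeomEquiv T P Q) : GeomEquiv T Q P := by
  obtain ⟨σ, hσ, hPQ⟩ := h
  exact ⟨σ.symm, symmetry_symm hσ, by rw [← hPQ, image_symm_image]⟩

lemma geom_trans {P Q R : Set (EucSp d)} (h : GeomEquiv T P Q) (h' : GeomEquiv T Q R) :
    GeomEquiv T P R := by
  obtain ⟨σ, hσ, h1⟩ := h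
  obtain ⟨τ, hτ, h2⟩ := h'
  exact ⟨σ.trans τ, by rw [IsSymmetryOf, image_trans, hσ, hτ], by rw [image_trans_set, h1, h2]⟩

section QuotTools
universe u
variable {X : Type u}

lemma quot_map_surj {r s : X → X → Prop} (h : ∀ a b, r a b → s a b) :
    Function.Surjective (Quot.map (fun x => x) h : Quot r → Quot s) := by
  intro q
  induction q using Quot.ind with
  | _ a => exact ⟨Quot.mk r a, rfl⟩

lemma mk_quot_le {r s : X → X → Prop} (h : ∀ a b, r a b → s a b) :
    Cardinal.mk (Quot s) ≤ Cardinal.mk (Quot r) :=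
  Cardinal.mk_le_of_surjective (quot_map_surj h)

lemma rel_of_quot_eq {r : X → X → Prop} (hr : Equivalence r) {a b : X}
    (h : Quot.mk r a = Quot.mk r b) : r a b :=
  hr.eqvGen_iff.1 (Quot.eq.1 h)

lemma rel_upgrade {r s : X → X → Prop} (hrs : ∀ a b, r a b → s a b)
    (hr : Equivalence r) (hfin : Cardinal.mk (Quot r) < Cardinal.aleph0)
    (heq : Cardinal.mk (Quot r) = Cardinal.mk (Quot s)) :
    ∀ a b : X, s a b → r a b := by
  have hFr : Finite (Quot r) := Cardinal.lt_aleph0_iff_finite.1 hfin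
  obtain ⟨e⟩ : Nonempty (Quot r ≃ Quot s) := Cardinal.eq.1 heq
  set g : Quot r → Quot s := Quot.map (fun x => x) hrs with hg
  have hsurj : Function.Surjective g := quot_map_surj hrs
  have hsurj2 : Function.Surjective (e.symm ∘ g) := (e.symm.surjective).comp hsurj
  have hinj2 : Function.Injective (e.symm ∘ g) :=
    Finite.injective_iff_surjective.2 hsurj2
  have hginj : Function.Injective g := fun a b hab => hinj2 (by simp [hab])
  intro a b hs
  have : g (Quot.mk r a) = g (Quot.mk r b) := by
    have h1 : g (Quot.mk r a) = Quot.mk s a := rfl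
    have h2 : g (Quot.mk r b) = Quot.mk s b := rfl
    rw [h1, h2]
    exact Quot.sound hs
  exact rel_of_quot_eq hr (hginj this)

end QuotTools
section Connectivity

lemma affine_proper_interior_empty (W : AffineSubspace ℝ (EucSp d)) (hW : W ≠ ⊤) :
    interior (W : Set (EucSp d)) = ∅ := by
  rw [Set.eq_empty_iff_forall_notMem]
  intro x hx
  apply hW
  apply top_unique
  intro y _
  obtain ⟨ε, hε, hball⟩ := Metric.mem_nhds_iff.1 (mem_interior_iff_mem_nhds.1 hx)
  have hxW : x ∈ W := interior_subset hx
  by_cases hxy : y = x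
  · rw [hxy]; exact hxW
  · have hd : dist y x > 0 := dist_pos.2 hxy
    set c : ℝ := ε / (2 * dist y x) with hc
    have hc0 : c > 0 := by positivity
    set z : EucSp d := c • (y - x) + x with hz
    have hzW : z ∈ W := by
      apply hball
      have : dist z x < ε := by
        rw [hz]
        rw [dist_eq_norm]
        simp only [add_sub_cancel_right]
        rw [norm_smul]
        rw [Real.norm_eq_abs, abs_of_pos hc0]
        have hnorm : ‖y - x‖ = dist y x := by rw [dist_eq_norm]
        rw [hnorm, hc]
        rw [div_mul_eq_mul_div, mul_comm]
        rw [mul_comm 2 (dist y x), mul_div_assoc]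
        calc dist y x * (ε / (dist y x * 2)) = ε / 2 * (dist y x / dist y x) := by ring
        _ = ε / 2 := by rw [div_self (ne_of_gt hd), mul_one]
        _ < ε := by linarith
      exact Metric.mem_ball.2 this
    have hy : y = c⁻¹ • (z -ᵥ x) +ᵥ x := by
      rw [hz]
      rw [vsub_eq_sub, add_sub_cancel_right, smul_smul, inv_mul_cancel₀ (ne_of_gt hc0),
        one_smul, vadd_eq_add, sub_add_cancel]
    rw [hy]
    exact W.smul_vsub_vadd_mem c⁻¹ hzW hxW hxW

lemma span_ne_top_of_fdimZ_lt {F : Set (EucSp d)} (h : fdimZ F < (d : ℤ)) :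
    affineSpan ℝ F ≠ ⊤ := by
  intro htop
  by_cases hF : F = ∅
  · subst hF
    rw [AffineSubspace.span_empty] at htop
    have : (default : EucSp d) ∈ (⊥ : AffineSubspace ℝ (EucSp d)) := by
      rw [htop]; trivial
    exact AffineSubspace.notMem_bot ℝ (EucSp d) _ this
  · rw [fdimZ, if_neg hF, htop, AffineSubspace.direction_top] at h
    have : Module.finrank ℝ (⊤ : Submodule ℝ (EucSp d)) = d := by
      rw [finrank_top]; simp [finrank_euclideanSpace]
    omega

lemma exists_point_avoiding {B : Set (Set (EucSp d))} (hcnt : B.Countable)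
    (hcl : ∀ b ∈ B, IsClosed b ∧ interior b = ∅) {U : Set (EucSp d)} (hU : IsOpen U)
    (hne : U.Nonempty) : ∃ x ∈ U, ∀ b ∈ B, x ∉ b := by
  have hdense : Dense (⋂ b ∈ B, bᶜ) := by
    apply dense_biInter_of_isOpen (fun b hb => (hcl b hb).1.isOpen_compl) hcnt
    intro b hb
    exact interior_eq_empty_iff_dense_compl.1 (hcl b hb).2
  obtain ⟨x, hx1, hx2⟩ := hdense.exists_mem_open hU hne
  exact ⟨x, hx2, fun b hb => Set.mem_iInter₂.1 hx1 b hb⟩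

/-- The "bad" low-dimensional intersections of pairs of tiles. -/
def badPairs (T : Tiling d) : Set (Set (EucSp d)) :=
  {F | ∃ R ∈ T.tiles, ∃ R' ∈ T.tiles, F = R ∩ R' ∧ fdimZ (R ∩ R') ≤ (d : ℤ) - 3}

lemma badPairs_countable : (badPairs T).Countable := by
  apply Set.Countable.mono _ (Set.Countable.image2 T.countable T.countable (· ∩ ·))
  rintro F ⟨R, hR, R', hR', rfl, -⟩
  exact Set.mem_image2_of_mem hR hR'

lemma badPairs_closed {F : Set (EucSp d)} (hF : F ∈ badPairs T) :
    IsClosed F ∧ interior F = ∅ := by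
  obtain ⟨R, hR, R', hR', rfl, hdim⟩ := hF
  constructor
  · exact (tile_closed hR).inter (tile_closed hR')
  · have h1 : interior (R ∩ R') ⊆ interior ((affineSpan ℝ (R ∩ R') : Set (EucSp d))) :=
      interior_mono (subset_affineSpan ℝ _)
    rw [affine_proper_interior_empty _ (span_ne_top_of_fdimZ_lt (by omega))] at h1
    exact Set.eq_empty_iff_forall_notMem.2 (fun x hx => h1 hx)

/-- Spans of cones over bad sets from a fixed point. -/
def coneSpans (T : Tiling d) (x0 : EucSp d) : Set (Set (EucSp d)) :=
  {W | ∃ F ∈ badPairs T, W = (affineSpan ℝ (insert x0 F) : Set (EucSp d))}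

lemma coneSpans_countable (x0 : EucSp d) : (coneSpans T x0).Countable := by
  apply Set.Countable.mono _
    ((badPairs_countable (T := T)).image (fun F => (affineSpan ℝ (insert x0 F) : Set (EucSp d))))
  rintro W ⟨F, hF, rfl⟩
  exact Set.mem_image_of_mem _ hF

lemma fdimZ_nonneg_of_nonempty {F : Set (EucSp d)} (h : F.Nonempty) : 0 ≤ fdimZ F := by
  rw [fdimZ, if_neg (Set.nonempty_iff_ne_empty.1 h)]
  positivity

lemma coneSpans_closed {x0 : EucSp d} {W : Set (EucSp d)} (hW : W ∈ coneSpans T x0) :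
    IsClosed W ∧ interior W = ∅ := by
  obtain ⟨F, hF, rfl⟩ := hW
  have hdim : (Module.finrank ℝ (affineSpan ℝ (insert x0 F)).direction : ℤ) < d := by
    by_cases hFe : F = ∅
    · subst hFe
      have : affineSpan ℝ (insert x0 (∅ : Set (EucSp d))) = affineSpan ℝ {x0} := by
        congr 1
        simp
      rw [this, direction_affineSpan, vectorSpan_singleton]
      obtain ⟨R, hR, R', hR', he, hd3⟩ := hF
      have h0 : fdimZ (R ∩ R') = -1 := by
        rw [fdimZ, if_pos he.symm]
      simp only [finrank_bot, Nat.cast_zero]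
      omega
    · obtain ⟨q, hq⟩ := Set.nonempty_iff_ne_empty.2 hFe
      have hq' : q ∈ affineSpan ℝ F := subset_affineSpan ℝ F hq
      have hins : affineSpan ℝ (insert x0 F) =
          affineSpan ℝ (insert x0 ((affineSpan ℝ F : Set (EucSp d)))) := by
        rw [affineSpan_insert_affineSpan]
      rw [hins, AffineSubspace.direction_affineSpan_insert hq']
      have hle := Submodule.finrank_sup_add_finrank_inf_eq
        (Submodule.span ℝ {x0 -ᵥ q}) (affineSpan ℝ F).direction
      have h1 : Module.finrank ℝ (Submodule.span ℝ ({x0 -ᵥ q} : Set (EucSp d))) ≤ 1 := by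
        by_cases hv : (x0 -ᵥ q) = 0
        · rw [hv]
          have : Submodule.span ℝ ({0} : Set (EucSp d)) = ⊥ := Submodule.span_zero_singleton ℝ
          rw [this, finrank_bot]
          omega
        · rw [finrank_span_singleton hv]
      obtain ⟨R, hR, R', hR', he, hd3⟩ := hF
      have h2 : (Module.finrank ℝ (affineSpan ℝ F).direction : ℤ) ≤ (d : ℤ) - 3 := by
        have := he ▸ hd3
        rw [fdimZ, if_neg hFe] at this
        exact this
      have h3 : Module.finrank ℝ ((Submodule.span ℝ {x0 -ᵥ q}) ⊔
          (affineSpan ℝ F).direction : Submodule ℝ (EucSp d)) ≤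
          Module.finrank ℝ (Submodule.span ℝ {x0 -ᵥ q}) +
          Module.finrank ℝ (affineSpan ℝ F).direction := by omega
      have h4 := le_trans h3 (by omega : Module.finrank ℝ (Submodule.span ℝ {x0 -ᵥ q}) +
          Module.finrank ℝ (affineSpan ℝ F).direction ≤
          1 + Module.finrank ℝ (affineSpan ℝ F).direction)
      omega
  have hne : affineSpan ℝ (insert x0 F) ≠ ⊤ := by
    intro htop
    rw [htop, AffineSubspace.direction_top] at hdim
    have : Module.finrank ℝ (⊤ : Submodule ℝ (EucSp d)) = d := by
      rw [finrank_top]; simp [finrank_euclideanSpace]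
    omega
  exact ⟨(affineSpan ℝ (insert x0 F)).closed_of_finiteDimensional,
    affine_proper_interior_empty _ hne⟩

lemma finite_tiles_meeting {K : Set (EucSp d)} (hK : IsCompact K) :
    {R | R ∈ T.tiles ∧ (R ∩ K).Nonempty}.Finite := by
  classical
  set U : EucSp d → Set (EucSp d) := fun x => Classical.choose (T.locallyFinite x) with hU
  have hUnhds : ∀ x, U x ∈ nhds x := fun x => (Classical.choose_spec (T.locallyFinite x)).1
  have hUfin : ∀ x, {P | P ∈ T.tiles ∧ (P ∩ U x).Nonempty}.Finite :=
    fun x => (Classical.choose_spec (T.locallyFinite x)).2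
  obtain ⟨t, ht⟩ := hK.elim_nhds_subcover U (fun x _ => hUnhds x)
  have htcov := ht
  apply Set.Finite.subset (Set.Finite.biUnion t.finite_toSet
    (fun x _ => hUfin x))
  rintro R ⟨hRt, y, hyR, hyK⟩
  obtain ⟨x, hxt, hyU⟩ := Set.mem_iUnion₂.1 (htcov.2 hyK)
  exact Set.mem_iUnion₂.2 ⟨x, hxt, hRt, ⟨y, hyR, hyU⟩⟩

lemma reach_of_closed_cover {ι : Type} (S : Set ι) (hS : S.Finite) (K : ι → Set ℝ)
    (hcl : ∀ i ∈ S, IsClosed (K i))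
    (hcov : Set.Icc (0:ℝ) 1 ⊆ ⋃ i ∈ S, K i)
    (hsub : ∀ i ∈ S, K i ⊆ Set.Icc (0:ℝ) 1)
    {a b : ι} (ha : a ∈ S) (hb : b ∈ S)
    (h0 : (0:ℝ) ∈ K a) (h1 : (1:ℝ) ∈ K b) :
    Relation.ReflTransGen (fun i j => i ∈ S ∧ j ∈ S ∧ (K i ∩ K j).Nonempty) a b := by
  classical
  set r : ι → ι → Prop := fun i j => i ∈ S ∧ j ∈ S ∧ (K i ∩ K j).Nonempty with hr
  set Reach : Set ι := {i | i ∈ S ∧ Relation.ReflTransGen r a i} with hReach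
  have hReachS : Reach ⊆ S := fun i hi => hi.1
  set Uu : Set ℝ := ⋃ i ∈ Reach, K i with hUu
  set Vv : Set ℝ := ⋃ i ∈ S \ Reach, K i with hVv
  have hUc : IsClosed Uu := Set.Finite.isClosed_biUnion (hS.subset hReachS)
    (fun i hi => hcl i (hReachS hi))
  have hVc : IsClosed Vv := Set.Finite.isClosed_biUnion (hS.subset (Set.diff_subset))
    (fun i hi => hcl i hi.1)
  have hcover : Set.Icc (0:ℝ) 1 ⊆ Uu ∪ Vv := by
    intro t ht
    obtain ⟨i, hiS, hiK⟩ := Set.mem_iUnion₂.1 (hcov ht)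
    by_cases hiR : i ∈ Reach
    · exact Or.inl (Set.mem_iUnion₂.2 ⟨i, hiR, hiK⟩)
    · exact Or.inr (Set.mem_iUnion₂.2 ⟨i, ⟨hiS, hiR⟩, hiK⟩)
  have hdisj : Set.Icc (0:ℝ) 1 ∩ (Uu ∩ Vv) = ∅ := by
    rw [Set.eq_empty_iff_forall_notMem]
    rintro t ⟨htI, htU, htV⟩
    obtain ⟨i, hiR, hiK⟩ := Set.mem_iUnion₂.1 htU
    obtain ⟨j, hjSV, hjK⟩ := Set.mem_iUnion₂.1 htV
    apply hjSV.2
    exact ⟨hjSV.1, hiR.2.tail ⟨hiR.1, hjSV.1, ⟨t, hiK, hjK⟩⟩⟩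
  have hVempty : Set.Icc (0:ℝ) 1 ∩ Vv = ∅ := by
    by_contra hVne
    have h2 := isPreconnected_closed_iff.1 isPreconnected_Icc Uu Vv hUc hVc hcover
      ⟨0, (by norm_num : (0:ℝ) ∈ Set.Icc (0:ℝ) 1), Set.mem_iUnion₂.2 ⟨a, ⟨ha, Relation.ReflTransGen.refl⟩, h0⟩⟩
      (Set.nonempty_iff_ne_empty.2 hVne)
    rw [hdisj] at h2
    exact Set.not_nonempty_empty h2
  have h1U : (1:ℝ) ∈ Uu := by
    rcases hcover (by norm_num : (1:ℝ) ∈ Set.Icc (0:ℝ) 1) with h | h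
    · exact h
    · exact absurd (Set.mem_inter (by norm_num : (1:ℝ) ∈ Set.Icc (0:ℝ) 1) h)
        (Set.eq_empty_iff_forall_notMem.1 hVempty 1)
  obtain ⟨i, hiR, hiK⟩ := Set.mem_iUnion₂.1 h1U
  exact hiR.2.tail ⟨hiR.1, hb, ⟨1, hiK, h1⟩⟩

lemma chain_of_rtg {P : Set (EucSp d)} (hP : P ∈ T.tiles)
    {r : Set (EucSp d) → Set (EucSp d) → Prop}
    (hr : ∀ i j, r i j → i ∈ T.tiles ∧ j ∈ T.tiles ∧ (d : ℤ) - 2 ≤ fdimZ (i ∩ j))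
    {Q : Set (EucSp d)} (h : Relation.ReflTransGen r P Q) : ∃ m, TileChain T P Q m := by
  induction h with
  | refl => exact ⟨0, tileChain_refl hP⟩
  | tail hsteps hstep ih =>
      obtain ⟨m, hm⟩ := ih
      obtain ⟨h1, h2, h3⟩ := hr _ _ hstep
      exact ⟨m + 1, tileChain_concat hm (tileChain_single h1 h2 h3)⟩

lemma exists_tileChain {P Q : Set (EucSp d)} (hP : P ∈ T.tiles) (hQ : Q ∈ T.tiles) :
    ∃ m, TileChain T P Q m := by
  classical
  obtain ⟨-, hPint⟩ := T.polytope P hP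
  obtain ⟨-, hQint⟩ := T.polytope Q hQ
  -- pick x0 in the interior of P avoiding all bad sets
  obtain ⟨x0, hx0U, hx0B⟩ := exists_point_avoiding (badPairs_countable (T := T))
    (fun b hb => badPairs_closed hb) isOpen_interior hPint
  -- pick y in the interior of Q avoiding all bad sets and all cone spans
  obtain ⟨y, hyU, hyB⟩ := exists_point_avoiding (B := badPairs T ∪ coneSpans T x0)
    ((badPairs_countable (T := T)).union (coneSpans_countable x0))
    (fun b hb => hb.elim (fun h => badPairs_closed h) (fun h => coneSpans_closed h))
    isOpen_interior hQint
  set γ : ℝ →ᵃ[ℝ] EucSp d := AffineMap.lineMap x0 y with hγ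
  have hγc : Continuous γ := AffineMap.lineMap_continuous
  set seg : Set (EucSp d) := γ '' Set.Icc (0:ℝ) 1 with hseg
  have hsegcompact : IsCompact seg := isCompact_Icc.image hγc
  -- every point on the segment avoids all bad sets
  have havoid : ∀ t : ℝ, t ∈ Set.Icc (0:ℝ) 1 → ∀ F ∈ badPairs T, γ t ∉ F := by
    intro t htI F hF hmem
    by_cases ht0 : t = 0
    · subst ht0
      rw [hγ, AffineMap.lineMap_apply_zero] at hmem
      exact hx0B F hF hmem
    · have hy' : y ∈ (affineSpan ℝ (insert x0 F) : Set (EucSp d)) := by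
        have hzW : γ t ∈ affineSpan ℝ (insert x0 F) :=
          subset_affineSpan ℝ _ (Set.mem_insert_of_mem _ hmem)
        have hx0W : x0 ∈ affineSpan ℝ (insert x0 F) :=
          subset_affineSpan ℝ _ (Set.mem_insert _ _)
        have hyeq : y = t⁻¹ • (γ t -ᵥ x0) +ᵥ x0 := by
          rw [hγ, AffineMap.lineMap_apply, vadd_vsub, smul_smul,
            inv_mul_cancel₀ ht0, one_smul, vsub_vadd]
        rw [hyeq]
        exact (affineSpan ℝ (insert x0 F)).smul_vsub_vadd_mem t⁻¹ hzW hx0W hx0W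
      exact hyB _ (Or.inr ⟨F, hF, rfl⟩) hy'
  -- the finitely many tiles meeting the segment
  set S : Set (Set (EucSp d)) := {R | R ∈ T.tiles ∧ (R ∩ seg).Nonempty} with hS
  have hSfin : S.Finite := finite_tiles_meeting hsegcompact
  set K : Set (EucSp d) → Set ℝ := fun R => γ ⁻¹' R ∩ Set.Icc (0:ℝ) 1 with hK
  have hKcl : ∀ R ∈ S, IsClosed (K R) :=
    fun R hR => ((tile_closed hR.1).preimage hγc).inter isClosed_Icc
  have hKcov : Set.Icc (0:ℝ) 1 ⊆ ⋃ R ∈ S, K R := by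
    intro t ht
    have : γ t ∈ ⋃₀ T.tiles := by rw [T.covers]; trivial
    obtain ⟨R, hRt, hmem⟩ := this
    exact Set.mem_iUnion₂.2 ⟨R, ⟨hRt, ⟨γ t, hmem, Set.mem_image_of_mem γ ht⟩⟩, hmem, ht⟩
  have hPS : P ∈ S := by
    refine ⟨hP, ⟨x0, interior_subset hx0U, ?_⟩⟩
    refine ⟨0, (by norm_num : (0:ℝ) ∈ Set.Icc (0:ℝ) 1), ?_⟩
    rw [hγ, AffineMap.lineMap_apply_zero]
  have hQS : Q ∈ S := by
    refine ⟨hQ, ⟨y, interior_subset hyU, ?_⟩⟩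
    refine ⟨1, (by norm_num : (1:ℝ) ∈ Set.Icc (0:ℝ) 1), ?_⟩
    rw [hγ, AffineMap.lineMap_apply_one]
  have h0K : (0:ℝ) ∈ K P := by
    refine ⟨?_, (by norm_num : _ ∈ Set.Icc (0:ℝ) 1)⟩
    show γ 0 ∈ P
    rw [hγ, AffineMap.lineMap_apply_zero]
    exact interior_subset hx0U
  have h1K : (1:ℝ) ∈ K Q := by
    refine ⟨?_, (by norm_num : _ ∈ Set.Icc (0:ℝ) 1)⟩
    show γ 1 ∈ Q
    rw [hγ, AffineMap.lineMap_apply_one]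
    exact interior_subset hyU
  have hreach := reach_of_closed_cover S hSfin K hKcl hKcov
    (fun R hR => Set.inter_subset_right) hPS hQS h0K h1K
  -- convert the abstract chain into a TileChain
  refine chain_of_rtg hP ?_ hreach
  rintro i j ⟨hiS, hjS, t, htKi, htKj⟩
  have htI : t ∈ Set.Icc (0:ℝ) 1 := htKi.2
  have hmemi : γ t ∈ i := htKi.1
  have hmemj : γ t ∈ j := htKj.1
  have hdim : (d : ℤ) - 2 ≤ fdimZ (i ∩ j) := by
    by_contra hlt
    have hbad : i ∩ j ∈ badPairs T :=
      ⟨i, hiS.1, j, hjS.1, rfl, by omega⟩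
    exact havoid t htI (i ∩ j) hbad ⟨hmemi, hmemj⟩
  exact ⟨hiS.1, hjS.1, hdim⟩

end Connectivity
section Core

lemma congruent_mono {j k : ℕ} (hj : j ≤ k) {P Q : Set (EucSp d)} (hP : P ∈ T.tiles)
    (h : CongruentCoronas T k P Q) : CongruentCoronas T j P Q := by
  obtain ⟨α, h1, h2⟩ := h
  exact ⟨α, h1, congr_restrict α h2 h1 hP hj⟩

lemma congruent_equiv (k : ℕ) :
    Equivalence (fun a b : ↥T.tiles => CongruentCoronas T k (a : Set (EucSp d)) b) :=
  ⟨fun a => congruent_refl a.2 k, congruent_symm, congruent_trans⟩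

/-- `α` is a `k`-corona congruence at the tile `R`. -/
def GoodAt (T : Tiling d) (k : ℕ) (α : EucSp d ≃ᵢ EucSp d) (R : Set (EucSp d)) : Prop :=
  R ∈ T.tiles ∧ (fun Q => α '' Q) '' tileCorona T k R = tileCorona T k (α '' R)

lemma goodAt_tile_image {k : ℕ} {α : EucSp d ≃ᵢ EucSp d} {R : Set (EucSp d)}
    (h : GoodAt T k α R) : α '' R ∈ T.tiles :=
  (mem_image_corona α h.2 (self_mem_tileCorona h.1 k)).1

lemma goodAt_step {k : ℕ} (hk : 1 ≤ k)
    (hupg : ∀ R S : Set (EucSp d), R ∈ T.tiles → S ∈ T.tiles →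
      CongruentCoronas T (k-1) R S → CongruentCoronas T k R S)
    (hsym : ∀ P ∈ T.tiles, SymsExtend T k P)
    {α : EucSp d ≃ᵢ EucSp d} {R S : Set (EucSp d)}
    (hR : GoodAt T k α R) (hS : S ∈ T.tiles)
    (hdist : tileDist T R S ≤ ((1:ℕ) : ℕ∞)) : GoodAt T k α S := by
  have hS' : α '' S ∈ T.tiles :=
    (mem_image_corona α hR.2 ⟨hS, hdist.trans (by exact_mod_cast hk)⟩).1
  have hcongr : (fun Q => α '' Q) '' tileCorona T (k-1) S = tileCorona T (k-1) (α '' S) :=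
    congr_step α hR.2 rfl hR.1 hk hS hdist
  obtain ⟨β, hβ1, hβ2⟩ := hupg S (α '' S) hS hS' ⟨α, rfl, hcongr⟩
  have hγS : (α.trans β.symm) '' S = S := by
    rw [image_trans_set, ← hβ1, image_symm_image]
  have hγcor : (fun Q => (α.trans β.symm) '' Q) '' tileCorona T (k-1) S
      = tileCorona T (k-1) S := by
    rw [image_trans, hcongr]
    exact image_corona_symm β (congr_restrict β hβ2 hβ1 hS (Nat.sub_le k 1))
  have hγk := hsym S hS (α.trans β.symm) hγS hγcor
  refine ⟨hS, ?_⟩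
  have hcomp : (fun Q : Set (EucSp d) => α '' Q)
      = fun Q => β '' ((α.trans β.symm) '' Q) := by
    funext X
    rw [image_trans_set, image_image_symm]
  rw [hcomp]
  have himg : (fun Q : Set (EucSp d) => β '' ((α.trans β.symm) '' Q)) '' tileCorona T k S
      = (fun Q => β '' Q) '' ((fun Q => (α.trans β.symm) '' Q) '' tileCorona T k S) := by
    rw [Set.image_image]
  rw [himg, hγk, hβ2]

lemma goodAt_all {k : ℕ} (hk : 1 ≤ k)
    (hupg : ∀ R S : Set (EucSp d), R ∈ T.tiles → S ∈ T.tiles →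
      CongruentCoronas T (k-1) R S → CongruentCoronas T k R S)
    (hsym : ∀ P ∈ T.tiles, SymsExtend T k P)
    {α : EucSp d ≃ᵢ EucSp d} {P : Set (EucSp d)} (h : GoodAt T k α P) :
    ∀ W ∈ T.tiles, GoodAt T k α W := by
  intro W hW
  obtain ⟨m, f, hf0, hfm, hft, hfc⟩ := exists_tileChain h.1 hW
  rw [← hfm]
  suffices hgen : ∀ j ≤ m, GoodAt T k α (f j) from hgen m le_rfl
  intro j
  induction j with
  | zero => intro _; rw [hf0]; exact h
  | succ i ih =>
      intro hle
      have hGi := ih (by omega)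
      refine goodAt_step hk hupg hsym hGi (hft (i+1) hle) ?_
      refine tileDist_le_iff.2 ?_
      have := hfc (i+1) (by omega) hle
      simp only [Nat.add_sub_cancel] at this
      exact tileChain_single (hft i (by omega)) (hft (i+1) hle) this

lemma core_rel {k : ℕ} (hk : 1 ≤ k) (hM : Mcount T (k-1) = Mcount T k)
    (hMfin : Mcount T k < Cardinal.aleph0)
    (hsym : ∀ P ∈ T.tiles, SymsExtend T k P) {P Q : Set (EucSp d)}
    (hP : P ∈ T.tiles) (hQ : Q ∈ T.tiles)
    (hCC : CongruentCoronas T k P Q) : GeomEquiv T P Q := by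
  have hupg : ∀ R S : Set (EucSp d), R ∈ T.tiles → S ∈ T.tiles →
      CongruentCoronas T (k-1) R S → CongruentCoronas T k R S := by
    intro R S hR hS h
    have hbase := rel_upgrade
      (r := fun a b : ↥T.tiles => CongruentCoronas T k (a : Set (EucSp d)) b)
      (s := fun a b : ↥T.tiles => CongruentCoronas T (k-1) (a : Set (EucSp d)) b)
      (fun a b hab => congruent_mono (Nat.sub_le k 1) a.2 hab)
      (congruent_equiv k) hMfin hM.symm
    exact hbase ⟨R, hR⟩ ⟨S, hS⟩ h
  obtain ⟨α, hPQ, hcor⟩ := hCC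
  have hGP : GoodAt T k α P := ⟨hP, by rw [hPQ]; exact hcor⟩
  have hGQ : GoodAt T k α.symm Q := by
    refine ⟨hQ, ?_⟩
    have h1 := image_corona_symm α hcor
    have h2 : α.symm '' Q = P := by rw [← hPQ, image_symm_image]
    rw [h2]; exact h1
  have hall := goodAt_all hk hupg hsym hGP
  have hall' := goodAt_all hk hupg hsym hGQ
  refine ⟨α, ?_, hPQ⟩
  apply Set.Subset.antisymm
  · rintro _ ⟨W, hW, rfl⟩
    exact goodAt_tile_image (hall W hW)
  · intro W hW
    refine ⟨α.symm '' W, goodAt_tile_image (hall' W hW), image_image_symm α W⟩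

lemma core_count {k : ℕ} (hk : 1 ≤ k) (hM : Mcount T (k-1) = Mcount T k)
    (hMfin : Mcount T k < Cardinal.aleph0)
    (hsym : ∀ P ∈ T.tiles, SymsExtend T k P) :
    geomOrbitCount T = Mcount T k := by
  have hiff : ∀ a b : ↥T.tiles,
      GeomEquiv T (a : Set (EucSp d)) b ↔ CongruentCoronas T k (a : Set (EucSp d)) b :=
    fun a b => ⟨fun h => geom_congruent h a.2 k,
      fun h => core_rel hk hM hMfin hsym a.2 b.2 h⟩
  exact Cardinal.mk_congr (Quot.congrRight hiff)

end Core
section Finiteness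

lemma isometry_image_extremePoint {P : Set (EucSp d)} {α : EucSp d ≃ᵢ EucSp d}
    (hα : α '' P = P) {x : EucSp d} (hx : x ∈ P.extremePoints ℝ) :
    α x ∈ P.extremePoints ℝ := by
  rw [mem_extremePoints] at hx ⊢
  obtain ⟨hxP, hext⟩ := hx
  have hαsymm : α.symm '' P = P := by
    have h0 := image_symm_image α P
    rwa [hα] at h0
  constructor
  · have : α x ∈ α '' P := Set.mem_image_of_mem _ hxP
    rwa [hα] at this
  · intro y hy z hz hseg
    have himg := image_openSegment ℝ ((aff α.symm).toAffineMap) y z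
    have hx' : x ∈ openSegment ℝ (α.symm y) (α.symm z) := by
      have : α.symm (α x) ∈ (aff α.symm).toAffineMap '' openSegment ℝ y z :=
        Set.mem_image_of_mem _ hseg
      rw [himg] at this
      simpa [coe_aff] using this
    have hy' : α.symm y ∈ P := by
      have : α.symm y ∈ α.symm '' P := Set.mem_image_of_mem _ hy
      rwa [hαsymm] at this
    have hz' : α.symm z ∈ P := by
      have : α.symm z ∈ α.symm '' P := Set.mem_image_of_mem _ hz
      rwa [hαsymm] at this
    obtain ⟨h1, h2⟩ := hext (α.symm y) hy' (α.symm z) hz' hx'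
    constructor
    · rw [← h1]; simp
    · rw [← h2]; simp

lemma extremePoints_span {P : Set (EucSp d)} (hP : P ∈ T.tiles) :
    P = convexHull ℝ (P.extremePoints ℝ) ∧ (P.extremePoints ℝ).Finite ∧
      affineSpan ℝ (P.extremePoints ℝ) = ⊤ := by
  obtain ⟨⟨s, hs⟩, hint⟩ := T.polytope P hP
  have hfin : (P.extremePoints ℝ).Finite := by
    apply Set.Finite.subset s.finite_toSet
    rw [hs]
    exact extremePoints_convexHull_subset
  have hcompact : IsCompact P := by
    rw [hs]; exact Set.Finite.isCompact_convexHull ℝ s.finite_toSet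
  have hconv : Convex ℝ P := by rw [hs]; exact convex_convexHull ℝ _
  have heq : P = convexHull ℝ (P.extremePoints ℝ) := by
    have h1 := closure_convexHull_extremePoints hcompact hconv
    have h2 : IsClosed (convexHull ℝ (P.extremePoints ℝ)) :=
      (Set.Finite.isCompact_convexHull ℝ hfin).isClosed
    rw [h2.closure_eq] at h1
    exact h1.symm
  refine ⟨heq, hfin, ?_⟩
  have := tile_span hP
  rw [heq, affineSpan_convexHull] at this
  exact this

lemma isometry_rigid {E : Set (EucSp d)} (hspan : affineSpan ℝ E = ⊤)
    {α β : EucSp d ≃ᵢ EucSp d} (h : ∀ e ∈ E, α e = β e) : α = β := by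
  classical
  set W : AffineSubspace ℝ (EucSp d) :=
    { carrier := {x | α x = β x}
      smul_vsub_vadd_mem' := by
        intro c p1 p2 p3 h1 h2 h3
        show α (c • (p1 -ᵥ p2) +ᵥ p3) = β (c • (p1 -ᵥ p2) +ᵥ p3)
        have key : ∀ (γ : EucSp d ≃ᵢ EucSp d),
            γ (c • (p1 -ᵥ p2) +ᵥ p3) = c • (γ p1 -ᵥ γ p2) +ᵥ γ p3 := by
          intro γ
          have h0 : ((aff γ).toAffineMap : EucSp d → EucSp d) = ⇑γ := rfl
          have hv := (aff γ).toAffineMap.map_vadd p3 (c • (p1 -ᵥ p2))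
          have h2' : (aff γ).toAffineMap.linear (c • (p1 -ᵥ p2))
              = c • ((aff γ).toAffineMap.linear (p1 -ᵥ p2)) := map_smul _ _ _
          have h3' := (aff γ).toAffineMap.linearMap_vsub p1 p2
          rw [h2', h3'] at hv
          rw [h0] at hv
          exact hv
        have hh1 : α p1 = β p1 := h1
        have hh2 : α p2 = β p2 := h2
        have hh3 : α p3 = β p3 := h3
        rw [key α, key β, hh1, hh2, hh3] } with hW
  have hEW : E ⊆ (W : Set (EucSp d)) := fun e he => h e he
  have : affineSpan ℝ E ≤ W := affineSpan_le.2 hEW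
  rw [hspan] at this
  apply IsometryEquiv.ext
  intro x
  exact this (AffineSubspace.mem_top ℝ (EucSp d) x)

lemma symmFix_finite {P : Set (EucSp d)} (hP : P ∈ T.tiles) :
    {α : EucSp d ≃ᵢ EucSp d | α '' P = P}.Finite := by
  classical
  obtain ⟨heq, hfin, hspan⟩ := extremePoints_span hP
  set E := P.extremePoints ℝ with hE
  have : Finite ↥E := hfin.to_subtype
  rw [← Set.finite_coe_iff]
  have hinj : Function.Injective
      (fun a : ↥{α : EucSp d ≃ᵢ EucSp d | α '' P = P} =>
        (fun e : ↥E => (⟨a.1 e, isometry_image_extremePoint a.2 e.2⟩ : ↥E))) := by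
    intro a b hab
    apply Subtype.ext
    apply isometry_rigid hspan
    intro e he
    have := congrFun hab ⟨e, he⟩
    exact Subtype.ext_iff.1 this
  exact Finite.of_injective _ hinj

lemma nat_eventually_const {n : ℕ} (f : ℕ → ℕ) (mono : Monotone f) (bdd : ∀ i, f i ≤ n) :
    ∃ K, ∀ j, K ≤ j → f j = f K := by
  have hfin : (Set.range f).Finite :=
    Set.Finite.subset (Set.finite_Iic n) (by rintro _ ⟨i, rfl⟩; exact bdd i)
  obtain ⟨v, ⟨K, rfl⟩, hmax⟩ := Set.Finite.exists_maximalFor id _ hfin ⟨f 0, 0, rfl⟩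
  refine ⟨K, fun j hj => ?_⟩
  have h1 : f K ≤ f j := mono hj
  have h2 := hmax ⟨j, rfl⟩ h1
  simp only [id] at h2
  omega

lemma sets_eventually_const {X : Type*} (S : ℕ → Set X)
    (anti : ∀ i j, i ≤ j → S j ⊆ S i) (hfin : (S 0).Finite) :
    ∃ K, ∀ j, K ≤ j → S j = S K := by
  have hfins : ∀ i, (S i).Finite := fun i => hfin.subset (anti 0 i (by omega))
  set f : ℕ → ℕ := fun i => (S 0).ncard - (S i).ncard with hf
  have hmono : Monotone f := by
    intro i j hij
    have h1 : (S j).ncard ≤ (S i).ncard := Set.ncard_le_ncard (anti i j hij) (hfins i)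
    have h2 : (S i).ncard ≤ (S 0).ncard := Set.ncard_le_ncard (anti 0 i (by omega)) hfin
    simp only [hf]
    omega
  obtain ⟨K, hK⟩ := nat_eventually_const (n := (S 0).ncard) f hmono
    (fun i => by simp only [hf]; omega)
  refine ⟨K, fun j hj => ?_⟩
  have hsub : S j ⊆ S K := anti K j hj
  have hcard : (S K).ncard ≤ (S j).ncard := by
    have := hK j hj
    simp only [hf] at this
    have h2 : (S j).ncard ≤ (S 0).ncard := Set.ncard_le_ncard (anti 0 j (by omega)) hfin
    have h3 : (S K).ncard ≤ (S 0).ncard := Set.ncard_le_ncard (anti 0 K (by omega)) hfin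
    omega
  exact Set.eq_of_subset_of_ncard_le hsub hcard (hfins K)

end Finiteness
section Assembly

lemma symmetry_corona {σ : EucSp d ≃ᵢ EucSp d} (hσ : IsSymmetryOf T σ)
    (A : Set (EucSp d)) (j : ℕ) :
    (fun Q => σ '' Q) '' tileCorona T j A = tileCorona T j (σ '' A) := by
  apply Set.Subset.antisymm
  · rintro _ ⟨R, ⟨hRt, hRd⟩, rfl⟩
    exact ⟨symmetry_mem_tiles hσ hRt, symmetry_dist hσ hRd⟩
  · rintro R' ⟨hR't, hR'd⟩
    refine ⟨σ.symm '' R', ⟨symmetry_mem_tiles (symmetry_symm hσ) hR't, ?_⟩,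
      image_image_symm σ R'⟩
    have := symmetry_dist (symmetry_symm hσ) hR'd
    rwa [image_symm_image] at this

lemma symsExtend_transport {k : ℕ} {A B : Set (EucSp d)} (σ : EucSp d ≃ᵢ EucSp d)
    (hσ : IsSymmetryOf T σ) (hAB : σ '' A = B) (hA : SymsExtend T k A) :
    SymsExtend T k B := by
  intro α hαB hαcor
  set γ : EucSp d ≃ᵢ EucSp d := (σ.trans α).trans σ.symm with hγ
  have hγim : ∀ X : Set (EucSp d), γ '' X = σ.symm '' (α '' (σ '' X)) := by
    intro X
    rw [hγ, image_trans_set, image_trans_set]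
  have hsymmBA : σ.symm '' B = A := by rw [← hAB, image_symm_image]
  have hγA : γ '' A = A := by
    rw [hγim, hAB, hαB, hsymmBA]
  have hγcors : ∀ C : Set (Set (EucSp d)), (fun Q => γ '' Q) '' C =
      (fun Q => σ.symm '' Q) '' ((fun Q => α '' Q) '' ((fun Q => σ '' Q) '' C)) := by
    intro C
    rw [hγ, image_trans, image_trans]
  have hγk1 : (fun Q => γ '' Q) '' tileCorona T (k-1) A = tileCorona T (k-1) A := by
    rw [hγcors, symmetry_corona hσ A (k-1), hAB, hαcor,
      symmetry_corona (symmetry_symm hσ) B (k-1), hsymmBA]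
  have hγkA := hA γ hγA hγk1
  have hαim : (fun Q : Set (EucSp d) => α '' Q) = fun Q => σ '' (γ '' (σ.symm '' Q)) := by
    funext X
    rw [hγim (σ.symm '' X), image_image_symm σ X, image_image_symm σ (α '' X)]
  rw [hαim]
  have hsplit : (fun Q : Set (EucSp d) => σ '' (γ '' (σ.symm '' Q))) '' tileCorona T k B
      = (fun Q => σ '' Q) '' ((fun Q => γ '' Q) ''
          ((fun Q => σ.symm '' Q) '' tileCorona T k B)) := by
    rw [Set.image_image, Set.image_image]
  rw [hsplit, symmetry_corona (symmetry_symm hσ) B k, hsymmBA, hγkA,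
    symmetry_corona hσ A k, hAB]

lemma forward_direction (n : ℕ) (hG : geomOrbitCount T = (n : Cardinal)) :
    ∃ k : ℕ, 1 ≤ k ∧ Mcount T (k - 1) = Mcount T k ∧
      (∀ P ∈ T.tiles, SymsExtend T k P) ∧ Mcount T k = (n : Cardinal) := by
  classical
  set rG := fun a b : ↥T.tiles => GeomEquiv T (a : Set (EucSp d)) b with hrG
  have hrGeq : Equivalence rG := ⟨fun a => geom_refl, geom_symm, geom_trans⟩
  have hMle : ∀ j : ℕ, Mcount T j ≤ (n : Cardinal) := by
    intro j
    have h1 : ∀ a b : ↥T.tiles, rG a b → CongruentCoronas T j (a : Set (EucSp d)) b :=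
      fun a b h => geom_congruent h a.2 j
    have h2 := mk_quot_le h1
    rw [← hG]
    exact h2
  have hMmono : ∀ j : ℕ, Mcount T j ≤ Mcount T (j+1) :=
    fun j => mk_quot_le (fun a b h => congruent_mono (by omega) a.2 h)
  have hMnat : ∀ j : ℕ, ∃ mj : ℕ, Mcount T j = (mj : Cardinal) :=
    fun j => Cardinal.lt_aleph0.1 (lt_of_le_of_lt (hMle j) (Cardinal.nat_lt_aleph0 n))
  choose m hm using hMnat
  have hmmono : Monotone m := by
    apply monotone_nat_of_le_succ
    intro j
    have h3 := hMmono j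
    rw [hm j, hm (j+1)] at h3
    exact_mod_cast h3
  have hmbdd : ∀ j, m j ≤ n := by
    intro j
    have h4 := hMle j
    rw [hm j] at h4
    exact_mod_cast h4
  obtain ⟨K₁, hK₁⟩ := nat_eventually_const m hmmono hmbdd
  set Sym : ↥T.tiles → ℕ → Set (EucSp d ≃ᵢ EucSp d) := fun a j =>
    {α | α '' (a : Set (EucSp d)) = a ∧
      (fun Q => α '' Q) '' tileCorona T j a = tileCorona T j a} with hSymdef
  have hanti : ∀ a : ↥T.tiles, ∀ i j, i ≤ j → Sym a j ⊆ Sym a i := by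
    rintro a i j hij α ⟨h1, h2⟩
    exact ⟨h1, congr_restrict α h2 h1 a.2 hij⟩
  have hfin0 : ∀ a : ↥T.tiles, (Sym a 0).Finite :=
    fun a => (symmFix_finite a.2).subset (fun α h => h.1)
  have hstab : ∀ a : ↥T.tiles, ∃ K, ∀ j, K ≤ j → Sym a j = Sym a K :=
    fun a => sets_eventually_const (Sym a) (hanti a) (hfin0 a)
  choose KS hKS using hstab
  have hQfin : Finite (Quot rG) := by
    apply Cardinal.lt_aleph0_iff_finite.1
    have : Cardinal.mk (Quot rG) = geomOrbitCount T := rfl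
    rw [this, hG]
    exact Cardinal.nat_lt_aleph0 n
  have : Fintype (Quot rG) := Fintype.ofFinite _
  set rep : Quot rG → ↥T.tiles := fun q => (Quot.exists_rep q).choose with hrepdef
  have hrepspec : ∀ q, Quot.mk rG (rep q) = q := fun q => (Quot.exists_rep q).choose_spec
  set K₂ : ℕ := Finset.univ.sup (fun q : Quot rG => KS (rep q)) with hK₂
  set k := max (K₁ + 1) (K₂ + 1) with hk
  have hmax1 := le_max_left (K₁ + 1) (K₂ + 1)
  have hmax2 := le_max_right (K₁ + 1) (K₂ + 1)
  have hk1 : 1 ≤ k := by omega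
  have hMeq : Mcount T (k-1) = Mcount T k := by
    have e1 : m (k-1) = m K₁ := hK₁ (k-1) (by omega)
    have e2 : m k = m K₁ := hK₁ k (by omega)
    rw [hm (k-1), hm k, e1, e2]
  have hsymall : ∀ P ∈ T.tiles, SymsExtend T k P := by
    intro P hP
    set a : ↥T.tiles := ⟨P, hP⟩ with ha
    set q := Quot.mk rG a with hq
    have hrel : rG (rep q) a := rel_of_quot_eq hrGeq (by rw [hrepspec q])
    obtain ⟨σ, hσ, hσAB⟩ := hrel
    have hKSle : KS (rep q) ≤ K₂ := by
      rw [hK₂]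
      exact Finset.le_sup (f := fun q : Quot rG => KS (rep q)) (Finset.mem_univ q)
    have hSE : SymsExtend T k ((rep q : Set (EucSp d))) := by
      intro α hα1 hα2
      have hmem : α ∈ Sym (rep q) (k-1) := ⟨hα1, hα2⟩
      have hiter : Sym (rep q) (k-1) = Sym (rep q) k := by
        rw [hKS (rep q) (k-1) (by omega), hKS (rep q) k (by omega)]
      rw [hiter] at hmem
      exact hmem.2
    exact symsExtend_transport σ hσ hσAB hSE
  have hMfin : Mcount T k < Cardinal.aleph0 :=
    lt_of_le_of_lt (hMle k) (Cardinal.nat_lt_aleph0 n)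
  refine ⟨k, hk1, hMeq, hsymall, ?_⟩
  have hcc := core_count hk1 hMeq hMfin hsymall
  rw [← hcc, hG]

end Assembly
end LocalThm
/-- `T` is `n`-isohedral if and only if for some positive `k` the two local conditions hold
with `M_k(T) = n`. -/
theorem n_isohedral_iff_local (d : ℕ) (T : Tiling d)
    (hfin : Mcount T 0 < Cardinal.aleph0) (n : ℕ) (hn : 1 ≤ n) :
    geomOrbitCount T = (n : Cardinal) ↔
      ∃ k : ℕ, 1 ≤ k ∧ Mcount T (k - 1) = Mcount T k ∧
        (∀ P ∈ T.tiles, SymsExtend T k P) ∧ Mcount T k = (n : Cardinal) := by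
  constructor
  · intro hG
    exact LocalThm.forward_direction n hG
  · rintro ⟨k, hk1, hM, hsym, hMn⟩
    have hMfin : Mcount T k < Cardinal.aleph0 := by
      rw [hMn]; exact Cardinal.nat_lt_aleph0 n
    rw [LocalThm.core_count hk1 hM hMfin hsym, hMn]

end
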